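/- Let (X,d) be a compact metric space and f : X → X a Lipschitz map with constant L ≥ 1, i.e. d(f(x),f(y)) ≤ L·d(x,y) for all x,y. Then h_top(f) ≤ dimH(X) · log L. -/

import Mathlib

open MeasureTheory
open scoped ENNReal

section
open MeasureTheory Dynamics ENNReal EReal Filter
lemma aux_entE_le {X : Type*} [UniformSpace X] (T : X → X) (F : Set X) (U : Set (X × X))
    {C lam : ℝ} (hC : 1 ≤ C) (hlam : 1 ≤ lam)
    (h : ∀ n : ℕ, (coverMincard T F U n : ℝ≥0∞) ≤ ENNReal.ofReal (C * lam ^ n)) :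
    coverEntropyEntourage T F U ≤ ((Real.log lam : ℝ) : EReal) := by
  have hCpos : 0 < C := lt_of_lt_of_le one_pos hC
  have hlpos : 0 < lam := lt_of_lt_of_le one_pos hlam
  have key : ∀ n : ℕ, 1 ≤ n →
      ENNReal.log (coverMincard T F U n) / (n : EReal)
        ≤ ((Real.log C / n + Real.log lam : ℝ) : EReal) := by
    intro n hn
    have hpos : 0 < C * lam ^ n := mul_pos hCpos (pow_pos hlpos n)
    have h1 : ENNReal.log (coverMincard T F U n) ≤ ((Real.log (C * lam ^ n) : ℝ) : EReal) := by
      refine le_trans (ENNReal.log_monotone (h n)) ?_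
      rw [ENNReal.log_ofReal, if_neg (not_le.2 hpos)]
    calc ENNReal.log (coverMincard T F U n) / (n : EReal)
        ≤ ((Real.log (C * lam ^ n) : ℝ) : EReal) / (n : EReal) :=
          EReal.monotone_div_right_of_nonneg (Nat.cast_nonneg' n) h1
      _ = ((Real.log (C * lam ^ n) / n : ℝ) : EReal) := by
          rw [EReal.coe_div]; norm_cast
      _ = ((Real.log C / n + Real.log lam : ℝ) : EReal) := by
          congr 1
          rw [Real.log_mul (ne_of_gt hCpos) (ne_of_gt (pow_pos hlpos n)), Real.log_pow]
          have : (n : ℝ) ≠ 0 := by positivity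
          field_simp
  have hlim : Tendsto (fun n : ℕ ↦ ((Real.log C / n + Real.log lam : ℝ) : EReal)) atTop
      (nhds ((Real.log lam : ℝ) : EReal)) := by
    apply (continuous_coe_real_ereal.tendsto _).comp
    have : Tendsto (fun n : ℕ ↦ Real.log C / n + Real.log lam) atTop
        (nhds (0 + Real.log lam)) :=
      (_root_.tendsto_const_div_atTop_nhds_zero_nat _).add tendsto_const_nhds
    simpa using this
  calc coverEntropyEntourage T F U
      ≤ atTop.limsup (fun n : ℕ ↦ ((Real.log C / n + Real.log lam : ℝ) : EReal)) :=
        limsup_le_limsup (by filter_upwards [eventually_ge_atTop 1] with n hn using key n hn)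
    _ = ((Real.log lam : ℝ) : EReal) := hlim.limsup_eq
end

section
open MeasureTheory Filter Set
open scoped ENNReal
-- subadditivity of rpow in ENNReal
lemma aux_rpow_add_le {s : ℝ} (hs : 0 ≤ s) (a b : ℝ≥0∞) :
    (a + b) ^ s ≤ (2:ℝ≥0∞) ^ s * (a ^ s + b ^ s) := by
  have h1 : a + b ≤ 2 * max a b := by
    rcases le_total a b with h | h
    · calc a + b ≤ b + b := by gcongr
        _ = 2 * b := (two_mul b).symm
        _ ≤ 2 * max a b := by gcongr; exact le_max_right a b
    · calc a + b ≤ a + a := by gcongr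
        _ = 2 * a := (two_mul a).symm
        _ ≤ 2 * max a b := by gcongr; exact le_max_left a b
  calc (a + b) ^ s ≤ (2 * max a b) ^ s := ENNReal.rpow_le_rpow h1 hs
    _ = 2 ^ s * (max a b) ^ s := ENNReal.mul_rpow_of_nonneg _ _ hs
    _ ≤ 2 ^ s * (a ^ s + b ^ s) := by
        gcongr
        rcases max_cases a b with ⟨h, _⟩ | ⟨h, _⟩ <;> rw [h]
        · exact le_self_add
        · exact le_add_self
-- small thickening radius
lemma aux_small_r {s : ℝ} (hs : 0 < s) {ε : ℝ} (hε : 0 < ε) {b : ℝ≥0∞} (hb : 0 < b) :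
    ∃ r : ℝ, 0 < r ∧ r ≤ ε ∧ ENNReal.ofReal (2 * r) ^ s ≤ b := by
  set β : ℝ := (min b 1).toReal with hβ
  have hβ0 : 0 < β := by
    rw [hβ]
    apply ENNReal.toReal_pos
    · exact (lt_min hb one_pos).ne'
    · exact ne_top_of_le_ne_top ENNReal.one_ne_top (min_le_right _ _)
  set ρ : ℝ := β ^ (1/s) with hρ
  have hρ0 : 0 < ρ := Real.rpow_pos_of_pos hβ0 _
  refine ⟨min ε (ρ/2), lt_min hε (by positivity), min_le_left _ _, ?_⟩
  have h2r : 2 * min ε (ρ/2) ≤ ρ := by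
    have := min_le_right ε (ρ/2); linarith
  calc ENNReal.ofReal (2 * min ε (ρ/2)) ^ s ≤ ENNReal.ofReal ρ ^ s := by
        exact ENNReal.rpow_le_rpow (ENNReal.ofReal_le_ofReal h2r) hs.le
    _ = ENNReal.ofReal (ρ ^ s) := ENNReal.ofReal_rpow_of_pos hρ0
    _ = ENNReal.ofReal β := by
        rw [hρ, ← Real.rpow_mul hβ0.le, one_div, inv_mul_cancel₀ hs.ne', Real.rpow_one]
    _ = min b 1 := ENNReal.ofReal_toReal (ne_top_of_le_ne_top ENNReal.one_ne_top (min_le_right _ _))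
    _ ≤ b := min_le_left _ _
end

section
open MeasureTheory Filter Set
open scoped ENNReal
lemma aux_extract {X : Type*} [MetricSpace X] [CompactSpace X] [MeasurableSpace X] [BorelSpace X]
    {s : ℝ} (hs : 0 < s) (hμ : μH[s] (Set.univ : Set X) = 0) {ε : ℝ} (hε : 0 < ε) :
    ∃ (F : Finset ℕ) (E : ℕ → Set X),
      (∀ y : X, ∃ n ∈ F, y ∈ E n) ∧
      (∀ n, EMetric.diam (E n) ≤ ENNReal.ofReal ε) ∧
      (∑ n ∈ F, EMetric.diam (E n) ^ s ≤ ENNReal.ofReal (ε ^ s / 2)) := by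
  have h2s_ne_top : ((2:ℝ≥0∞) ^ s) ≠ ⊤ :=
    ENNReal.rpow_ne_top_of_nonneg hs.le ENNReal.ofNat_ne_top
  have h2s_ne_zero : ((2:ℝ≥0∞) ^ s) ≠ 0 :=
    (ENNReal.rpow_pos (by norm_num) ENNReal.ofNat_ne_top).ne'
  set η₀ : ℝ≥0∞ := ENNReal.ofReal (ε ^ s / 4) * ((2:ℝ≥0∞) ^ s)⁻¹ with hη₀def
  have hεs : (0:ℝ) < ε ^ s := Real.rpow_pos_of_pos hε s
  have hη₀ : 0 < η₀ := by
    apply ENNReal.mul_pos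
    · exact (ENNReal.ofReal_pos.2 (by linarith)).ne'
    · exact (ENNReal.inv_pos.2 h2s_ne_top).ne'
  rw [Measure.hausdorffMeasure_apply] at hμ
  have h1 : (⨅ (t : ℕ → Set X) (_ : (Set.univ : Set X) ⊆ ⋃ n, t n)
      (_ : ∀ n, EMetric.diam (t n) ≤ ENNReal.ofReal (ε/2)),
      ∑' n, ⨆ _ : (t n).Nonempty, EMetric.diam (t n) ^ s) = 0 := by
    refine le_antisymm ?_ (zero_le)
    refine le_trans ?_ hμ.le
    exact le_iSup₂ (f := fun (r : ℝ≥0∞) (_ : 0 < r) => ⨅ (t : ℕ → Set X)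
      (_ : (Set.univ : Set X) ⊆ ⋃ n, t n) (_ : ∀ n, EMetric.diam (t n) ≤ r),
      ∑' n, ⨆ _ : (t n).Nonempty, EMetric.diam (t n) ^ s)
      (ENNReal.ofReal (ε/2)) (ENNReal.ofReal_pos.2 (by linarith))
  have h2 : (⨅ (t : ℕ → Set X) (_ : (Set.univ : Set X) ⊆ ⋃ n, t n)
      (_ : ∀ n, EMetric.diam (t n) ≤ ENNReal.ofReal (ε/2)),
      ∑' n, ⨆ _ : (t n).Nonempty, EMetric.diam (t n) ^ s) < η₀ := h1 ▸ hη₀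
  simp only [iInf_lt_iff] at h2
  obtain ⟨t, htcov, htdiam, htsum⟩ := h2
  have hradii : ∀ n : ℕ, ∃ r : ℝ, 0 < r ∧ r ≤ ε/4 ∧
      ENNReal.ofReal (2 * r) ^ s ≤ η₀ * (1/2:ℝ≥0∞) ^ (n+1) := by
    intro n
    apply aux_small_r hs (by linarith)
    exact ENNReal.mul_pos hη₀.ne' (ENNReal.pow_pos (by norm_num) _).ne'
  choose r hr0 hrle hrb using hradii
  set E : ℕ → Set X := fun n => Metric.thickening (r n) (t n) with hEdef
  have hEdiam2 : ∀ n, EMetric.diam (E n) ≤ EMetric.diam (t n) + ENNReal.ofReal (2 * r n) := by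
    intro n
    have h3 : E n = Metric.thickening ((r n).toNNReal : ℝ) (t n) := by
      rw [hEdef]; simp only []
      rw [Real.coe_toNNReal _ (hr0 n).le]
    calc EMetric.diam (E n) ≤ EMetric.diam (t n) + 2 * ((r n).toNNReal : ℝ≥0∞) := by
          rw [h3]; exact Metric.ediam_thickening_le _
      _ = EMetric.diam (t n) + ENNReal.ofReal (2 * r n) := by
          congr 1
          rw [show ((r n).toNNReal : ℝ≥0∞) = ENNReal.ofReal (r n) from rfl,
            show ((2:ℝ≥0∞)) = ENNReal.ofReal 2 by norm_num,
            ← ENNReal.ofReal_mul (by norm_num)]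
  have hcov : (Set.univ : Set X) ⊆ ⋃ n, E n :=
    htcov.trans (Set.iUnion_mono fun n => Metric.self_subset_thickening (hr0 n) _)
  obtain ⟨F, hF⟩ := isCompact_univ.elim_finite_subcover E
    (fun n => Metric.isOpen_thickening) hcov
  refine ⟨F, E, ?_, ?_, ?_⟩
  · intro y
    have := hF (Set.mem_univ y)
    simpa using this
  · intro n
    refine (hEdiam2 n).trans ?_
    calc EMetric.diam (t n) + ENNReal.ofReal (2 * r n)
        ≤ ENNReal.ofReal (ε/2) + ENNReal.ofReal (2 * (ε/4)) := by
          gcongr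
          · exact htdiam n
          · exact hrle n
      _ ≤ ENNReal.ofReal ε := by
          rw [← ENNReal.ofReal_add (by linarith) (by linarith)]
          exact ENNReal.ofReal_le_ofReal (by linarith)
  · have hperterm : ∀ n : ℕ, EMetric.diam (E n) ^ s
        ≤ (2:ℝ≥0∞) ^ s * ((⨆ _ : (t n).Nonempty, EMetric.diam (t n) ^ s)
            + ENNReal.ofReal (2 * r n) ^ s) := by
      intro n
      rcases (t n).eq_empty_or_nonempty with he | hne
      · have hEe : E n = ∅ := by rw [hEdef]; simp [he]
        rw [hEe]
        rw [show EMetric.diam (∅ : Set X) = 0 from Metric.ediam_empty]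
        rw [ENNReal.zero_rpow_of_pos hs]
        exact zero_le
      · calc EMetric.diam (E n) ^ s
            ≤ (EMetric.diam (t n) + ENNReal.ofReal (2 * r n)) ^ s :=
              ENNReal.rpow_le_rpow (hEdiam2 n) hs.le
          _ ≤ (2:ℝ≥0∞) ^ s * (EMetric.diam (t n) ^ s + ENNReal.ofReal (2 * r n) ^ s) :=
              aux_rpow_add_le hs.le _ _
          _ = (2:ℝ≥0∞) ^ s * ((⨆ _ : (t n).Nonempty, EMetric.diam (t n) ^ s)
              + ENNReal.ofReal (2 * r n) ^ s) := by rw [iSup_pos hne]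
    calc ∑ n ∈ F, EMetric.diam (E n) ^ s
        ≤ ∑' n : ℕ, EMetric.diam (E n) ^ s := ENNReal.sum_le_tsum F
      _ ≤ ∑' n : ℕ, (2:ℝ≥0∞) ^ s * ((⨆ _ : (t n).Nonempty, EMetric.diam (t n) ^ s)
            + ENNReal.ofReal (2 * r n) ^ s) := ENNReal.tsum_le_tsum hperterm
      _ = (2:ℝ≥0∞) ^ s * ((∑' n : ℕ, ⨆ _ : (t n).Nonempty, EMetric.diam (t n) ^ s)
            + ∑' n : ℕ, ENNReal.ofReal (2 * r n) ^ s) := by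
          rw [ENNReal.tsum_mul_left, ENNReal.tsum_add]
      _ ≤ (2:ℝ≥0∞) ^ s * (η₀ + η₀) := by
          gcongr
          · calc ∑' n : ℕ, ENNReal.ofReal (2 * r n) ^ s
                ≤ ∑' n : ℕ, η₀ * (1/2:ℝ≥0∞) ^ (n+1) := ENNReal.tsum_le_tsum hrb
              _ = η₀ * ∑' n : ℕ, (1/2:ℝ≥0∞) ^ (n+1) := ENNReal.tsum_mul_left
              _ ≤ η₀ * 1 := by
                  gcongr
                  have hgeo : ∑' n : ℕ, (1/2:ℝ≥0∞) ^ (n+1)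
                      = (1/2:ℝ≥0∞) * ∑' n : ℕ, (1/2:ℝ≥0∞) ^ n := by
                    rw [← ENNReal.tsum_mul_left]
                    congr 1; funext n; rw [pow_succ]; ring
                  rw [hgeo, ENNReal.tsum_geometric,
                    show (1:ℝ≥0∞) - 1/2 = 1/2 by rw [one_div, ENNReal.one_sub_inv_two],
                    one_div, inv_inv, ENNReal.inv_mul_cancel (by norm_num) ENNReal.ofNat_ne_top]
              _ = η₀ := mul_one _
      _ = ENNReal.ofReal (ε ^ s / 2) := by
          calc (2:ℝ≥0∞) ^ s * (η₀ + η₀)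
              = ENNReal.ofReal (ε ^ s / 4) * ((2:ℝ≥0∞) ^ s * ((2:ℝ≥0∞) ^ s)⁻¹) * 2 := by
                rw [hη₀def]; ring
            _ = ENNReal.ofReal (ε ^ s / 4) * 2 := by
                rw [ENNReal.mul_inv_cancel h2s_ne_zero h2s_ne_top, mul_one]
            _ = ENNReal.ofReal (ε ^ s / 2) := by
                rw [show ((2:ℝ≥0∞)) = ENNReal.ofReal 2 by norm_num,
                  ← ENNReal.ofReal_mul (by linarith)]
                congr 1; ring
end

section
open MeasureTheory Dynamics Filter
lemma aux_words {X : Type*} [MetricSpace X] (f : X → X) (ε : ℝ)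
    {ι : Type*} [Fintype ι] (E : ι → Set X) (a : ι → ℕ) (z : ι → Prop) [DecidablePred z]
    (hcover : ∀ y : X, ∃ i, y ∈ E i)
    (ha : ∀ i, 1 ≤ a i)
    (hdyn : ∀ i, ∀ k : ℕ, (z i ∨ k < a i) → ∀ x ∈ E i, ∀ y ∈ E i,
      dist (f^[k] x) (f^[k] y) ≤ ε)
    {lam : ℝ} (hlam : 1 ≤ lam)
    (hsum : ∑ i ∈ Finset.univ.filter (fun i => ¬ z i), (1/lam) ^ (a i) ≤ 1/2) (n : ℕ) :
    ∃ 𝒜 : Finset (Set X),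
      (∀ y : X, ∃ A ∈ 𝒜, y ∈ A) ∧
      (∀ A ∈ 𝒜, ∀ k < n, ∀ x ∈ A, ∀ y ∈ A, dist (f^[k] x) (f^[k] y) ≤ ε) ∧
      ((𝒜.card : ℝ) ≤ ((Fintype.card ι : ℝ) + 1) ^ n ∧
       (𝒜.card : ℝ) ≤ (((Fintype.card ι : ℝ) + 1) ^ (Finset.univ.sup a)
          + 2 * ((Finset.univ.filter z).card : ℝ)) * lam ^ n) := by
  classical
  set N : ℝ := (Fintype.card ι : ℝ) + 1 with hN
  set n₀ : ℕ := Finset.univ.sup a with hn₀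
  set Z : ℕ := (Finset.univ.filter z).card with hZ
  set C : ℝ := N ^ n₀ + 2 * Z with hC
  have hN1 : (1:ℝ) ≤ N := by
    have := Nat.cast_nonneg (α := ℝ) (Fintype.card ι); rw [hN]; linarith
  have hlam0 : (0:ℝ) < lam := lt_of_lt_of_le one_pos hlam
  have hC1 : (1:ℝ) ≤ C := by
    have h1 : (1:ℝ) ≤ N ^ n₀ := one_le_pow₀ hN1
    have hZ0 : (0:ℝ) ≤ 2 * Z := by positivity
    rw [hC]; linarith
  induction n using Nat.strong_induction_on with
  | _ n IH =>
    rcases Nat.eq_zero_or_pos n with rfl | hn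
    · refine ⟨{Set.univ}, fun y => ⟨Set.univ, Finset.mem_singleton_self _, trivial⟩,
        by simp, by simp, ?_⟩
      simp only [Finset.card_singleton, Nat.cast_one, pow_zero, mul_one]
      exact hC1
    · have key : ∀ i : ι, ∃ 𝒜 : Finset (Set X),
          (∀ y : X, ∃ A ∈ 𝒜, y ∈ A) ∧
          (∀ A ∈ 𝒜, ∀ k < n - a i, ∀ x ∈ A, ∀ y ∈ A, dist (f^[k] x) (f^[k] y) ≤ ε) ∧
          ((𝒜.card : ℝ) ≤ N ^ (n - a i) ∧ (𝒜.card : ℝ) ≤ C * lam ^ (n - a i)) :=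
        fun i => IH (n - a i) (Nat.sub_lt hn (ha i))
      choose G hGcov hGdyn hGcard using key
      set P : Finset ι := Finset.univ.filter (fun i => ¬ z i) with hP
      set 𝒜 : Finset (Set X) := ((Finset.univ.filter z).image E) ∪
          P.biUnion (fun i => (G i).image (fun A => E i ∩ f^[a i] ⁻¹' A)) with h𝒜
      have hcov : ∀ y : X, ∃ A ∈ 𝒜, y ∈ A := by
        intro y
        obtain ⟨i, hi⟩ := hcover y
        by_cases hz : z i
        · exact ⟨E i, Finset.mem_union_left _ (Finset.mem_image_of_mem E
            (Finset.mem_filter.2 ⟨Finset.mem_univ _, hz⟩)), hi⟩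
        · obtain ⟨A, hA, hyA⟩ := hGcov i (f^[a i] y)
          refine ⟨E i ∩ f^[a i] ⁻¹' A, Finset.mem_union_right _ ?_, ⟨hi, hyA⟩⟩
          exact Finset.mem_biUnion.2 ⟨i, Finset.mem_filter.2 ⟨Finset.mem_univ _, hz⟩,
            Finset.mem_image_of_mem _ hA⟩
      have hdy : ∀ A ∈ 𝒜, ∀ k < n, ∀ x ∈ A, ∀ y ∈ A, dist (f^[k] x) (f^[k] y) ≤ ε := by
        intro A hA k hk x hx y hy
        rcases Finset.mem_union.1 hA with hA | hA
        · obtain ⟨i, hi, rfl⟩ := Finset.mem_image.1 hA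
          exact hdyn i k (Or.inl (Finset.mem_filter.1 hi).2) x hx y hy
        · obtain ⟨i, hiP, hA⟩ := Finset.mem_biUnion.1 hA
          obtain ⟨A', hA', rfl⟩ := Finset.mem_image.1 hA
          rcases lt_or_ge k (a i) with hk' | hk'
          · exact hdyn i k (Or.inr hk') x hx.1 y hy.1
          · have h1 : f^[k] x = f^[k - a i] (f^[a i] x) := by
              rw [← Function.iterate_add_apply, Nat.sub_add_cancel hk']
            have h2 : f^[k] y = f^[k - a i] (f^[a i] y) := by
              rw [← Function.iterate_add_apply, Nat.sub_add_cancel hk']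
            rw [h1, h2]
            exact hGdyn i A' hA' (k - a i) (Nat.sub_lt_sub_right hk' hk) _ hx.2 _ hy.2
      have hcard : (𝒜.card : ℝ) ≤ (Z : ℝ) + ∑ i ∈ P, ((G i).card : ℝ) := by
        have h1 : 𝒜.card ≤ ((Finset.univ.filter z).image E).card +
            (P.biUnion (fun i => (G i).image (fun A => E i ∩ f^[a i] ⁻¹' A))).card :=
          Finset.card_union_le _ _
        have h2 : ((Finset.univ.filter z).image E).card ≤ Z := Finset.card_image_le
        have h3 : (P.biUnion (fun i => (G i).image (fun A => E i ∩ f^[a i] ⁻¹' A))).card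
            ≤ ∑ i ∈ P, (G i).card :=
          le_trans (Finset.card_biUnion_le)
            (Finset.sum_le_sum fun i _ => Finset.card_image_le)
        have h4 : 𝒜.card ≤ Z + ∑ i ∈ P, (G i).card := h1.trans (add_le_add h2 h3)
        calc (𝒜.card : ℝ) ≤ ((Z + ∑ i ∈ P, (G i).card : ℕ) : ℝ) := Nat.cast_le.2 h4
          _ = (Z : ℝ) + ∑ i ∈ P, ((G i).card : ℝ) := by push_cast; ring
      have hZP : (Z : ℝ) + (P.card : ℝ) ≤ N := by
        have h := Finset.card_filter_add_card_filter_not (s := Finset.univ) (p := z)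
        rw [Finset.card_univ] at h
        rw [hN, hZ, hP]
        have : ((Finset.univ.filter z).card : ℝ) + ((Finset.univ.filter (fun i => ¬ z i)).card : ℝ)
            = (Fintype.card ι : ℝ) := by exact_mod_cast h
        linarith
      have hb1 : (𝒜.card : ℝ) ≤ N ^ n := by
        refine hcard.trans ?_
        have hterm : ∀ i ∈ P, ((G i).card : ℝ) ≤ N ^ (n - 1) := by
          intro i _
          refine (hGcard i).1.trans (pow_le_pow_right₀ hN1 ?_)
          have := ha i; omega
        have h5 : ∑ i ∈ P, ((G i).card : ℝ) ≤ (P.card : ℝ) * N ^ (n-1) := by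
          refine (Finset.sum_le_sum hterm).trans ?_
          rw [Finset.sum_const, nsmul_eq_mul]
        have h6 : (Z:ℝ) ≤ (Z:ℝ) * N ^ (n-1) := by
          nlinarith [one_le_pow₀ (n := n-1) hN1, Nat.cast_nonneg (α := ℝ) Z]
        have h7 : (0:ℝ) < N ^ (n-1) := by positivity
        calc (Z : ℝ) + ∑ i ∈ P, ((G i).card : ℝ)
            ≤ ((Z:ℝ) + (P.card:ℝ)) * N ^ (n-1) := by nlinarith [Nat.cast_nonneg (α := ℝ) P.card]
          _ ≤ N * N ^ (n-1) := by nlinarith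
          _ = N ^ (n-1+1) := by ring
          _ = N ^ n := by congr 1; omega
      refine ⟨𝒜, hcov, hdy, hb1, ?_⟩
      rcases le_or_gt n n₀ with hle | hlt
      · refine hb1.trans ?_
        have h8 : N ^ n ≤ N ^ n₀ := pow_le_pow_right₀ hN1 hle
        have h9 : N ^ n₀ ≤ C := by
          rw [hC]; have : (0:ℝ) ≤ 2 * Z := by positivity
          linarith
        have h10 : (1:ℝ) ≤ lam ^ n := one_le_pow₀ hlam
        nlinarith
      · -- large n
        have hterm : ∀ i ∈ P, ((G i).card : ℝ) ≤ C * (lam ^ n * (1/lam)^(a i)) := by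
          intro i _
          refine (hGcard i).2.trans ?_
          have hai : a i ≤ n := (Finset.le_sup (Finset.mem_univ i)).trans hlt.le
          have : lam ^ (n - a i) = lam ^ n * (1/lam) ^ (a i) := by
            rw [one_div, inv_pow, ← div_eq_mul_inv, eq_div_iff (by positivity),
              ← pow_add]
            congr 1; omega
          rw [this]
        have h5 : ∑ i ∈ P, ((G i).card : ℝ) ≤ C * lam ^ n * ∑ i ∈ P, (1/lam)^(a i) := by
          refine (Finset.sum_le_sum hterm).trans (le_of_eq ?_)
          rw [Finset.mul_sum]
          exact Finset.sum_congr rfl fun i _ => by ring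
        have h10 : (1:ℝ) ≤ lam ^ n := one_le_pow₀ hlam
        have h11 : (0:ℝ) ≤ C * lam ^ n := by nlinarith
        have h12 : ∑ i ∈ P, ((G i).card : ℝ) ≤ C * lam ^ n * (1/2) := by
          exact h5.trans (mul_le_mul_of_nonneg_left hsum h11)
        have h13 : (Z : ℝ) ≤ C * lam ^ n * (1/2) := by
          have : 2 * (Z:ℝ) ≤ C := by
            rw [hC]; have : (0:ℝ) ≤ N ^ n₀ := by positivity
            linarith
          nlinarith
        refine hcard.trans ?_
        calc (Z : ℝ) + ∑ i ∈ P, ((G i).card : ℝ)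
            ≤ C * lam ^ n * (1/2) + C * lam ^ n * (1/2) := add_le_add h13 h12
          _ = C * lam ^ n := by ring
end

section
open MeasureTheory Dynamics Filter Set UniformSpace
open scoped ENNReal
lemma aux_iter_lip {X : Type*} [MetricSpace X] {f : X → X} {L : ℝ} (hL0 : 0 ≤ L)
    (hf : ∀ x y : X, dist (f x) (f y) ≤ L * dist x y) (k : ℕ) (x y : X) :
    dist (f^[k] x) (f^[k] y) ≤ L ^ k * dist x y := by
  induction k with
  | zero => simp
  | succ k IH =>
    rw [Function.iterate_succ_apply', Function.iterate_succ_apply']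
    calc dist (f (f^[k] x)) (f (f^[k] y)) ≤ L * dist (f^[k] x) (f^[k] y) := hf _ _
      _ ≤ L * (L ^ k * dist x y) := mul_le_mul_of_nonneg_left IH hL0
      _ = L ^ (k+1) * dist x y := by ring

lemma aux_mincard_le {X : Type*} [MetricSpace X] [Nonempty X] (f : X → X) {ε' ε : ℝ}
    (h : ε' < ε) {n : ℕ} {𝒜 : Finset (Set X)}
    (hcov : ∀ y : X, ∃ A ∈ 𝒜, y ∈ A)
    (hdyn : ∀ A ∈ 𝒜, ∀ k < n, ∀ x ∈ A, ∀ y ∈ A, dist (f^[k] x) (f^[k] y) ≤ ε') :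
    Dynamics.coverMincard f Set.univ {p : X × X | dist p.1 p.2 < ε} n ≤ 𝒜.card := by
  classical
  set g : Set X → X := fun A => if h : A.Nonempty then h.some else Classical.arbitrary X with hg
  have hcover : IsDynCoverOf f Set.univ {p : X × X | dist p.1 p.2 < ε} n (𝒜.image g) := by
    intro y _
    obtain ⟨A, hA, hyA⟩ := hcov y
    have hne : A.Nonempty := ⟨y, hyA⟩
    have hgA : g A ∈ A := by rw [hg]; simp only [dif_pos hne]; exact hne.some_mem
    simp only [Finset.coe_image, mem_iUnion]
    refine ⟨g A, Set.mem_image_of_mem g hA, ?_⟩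
    rw [mem_dynEntourage]
    intro k hk
    have h2 := hdyn A hA k hk (g A) hgA y hyA
    show (f^[k] y, f^[k] (g A)) ∈ {p : X × X | dist p.1 p.2 < ε}
    simp only [Set.mem_setOf_eq]
    rw [dist_comm]
    linarith
  calc coverMincard f Set.univ {p : X × X | dist p.1 p.2 < ε} n
      ≤ ((𝒜.image g).card : ℕ∞) := hcover.coverMincard_le_card
    _ ≤ (𝒜.card : ℕ∞) := by exact_mod_cast Finset.card_image_le
end

section
open MeasureTheory Dynamics Filter Set UniformSpace
open scoped ENNReal
set_option maxHeartbeats 2000000 in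
lemma aux_key {X : Type*} [MetricSpace X] [CompactSpace X] [Nonempty X]
    [MeasurableSpace X] [BorelSpace X]
    (f : X → X) {L : ℝ} (hL : 1 < L) (hf : ∀ x y : X, dist (f x) (f y) ≤ L * dist x y)
    {s : ℝ} (hs : 0 < s) (hμ : μH[s] (Set.univ : Set X) = 0) :
    Dynamics.coverEntropy f Set.univ ≤ ((s * Real.log L : ℝ) : EReal) := by
  classical
  have hL0 : (0:ℝ) < L := by linarith
  rw [Dynamics.coverEntropy_eq_iSup_basis Metric.uniformity_basis_dist f Set.univ]
  refine iSup₂_le fun ε hε => ?_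
  have hε'pos : 0 < ε/2 := by linarith
  obtain ⟨F, E, hcov, hdiam, hsum⟩ := aux_extract hs hμ hε'pos
  set ε' : ℝ := ε/2 with hε'def
  set ι := {m // m ∈ F} with hι
  set E' : ι → Set X := fun i => E i.1 with hE'
  set d : ι → ℝ := fun i => Metric.diam (E i.1) with hd
  have hdne : ∀ i : ι, EMetric.diam (E i.1) ≠ ⊤ :=
    fun i => ne_top_of_le_ne_top ENNReal.ofReal_ne_top (hdiam i.1)
  have hd0 : ∀ i, 0 ≤ d i := fun i => Metric.diam_nonneg
  have hd_le : ∀ i, d i ≤ ε' := by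
    intro i
    have := ENNReal.toReal_mono ENNReal.ofReal_ne_top (hdiam i.1)
    rwa [ENNReal.toReal_ofReal hε'pos.le] at this
  have hbdd : ∀ i : ι, Bornology.IsBounded (E i.1) :=
    fun i => Metric.isBounded_iff_ediam_ne_top.2 (hdne i)
  have hdist : ∀ i : ι, ∀ x ∈ E i.1, ∀ y ∈ E i.1, dist x y ≤ d i :=
    fun i x hx y hy => Metric.dist_le_diam_of_mem (hbdd i) hx hy
  -- real sum bound
  have hsumreal : ∑ i : ι, (d i) ^ s ≤ ε' ^ s / 2 := by
    have h1 : ∀ i : ι, (d i) ^ s = (EMetric.diam (E i.1) ^ s).toReal := by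
      intro i
      show Metric.diam (E i.1) ^ s = _
      rw [Metric.diam, ENNReal.toReal_rpow]
      rfl
    have h2 : (∑ n ∈ F, EMetric.diam (E n) ^ s).toReal ≤ ε' ^ s / 2 := by
      have h3 := ENNReal.toReal_mono ENNReal.ofReal_ne_top hsum
      rwa [ENNReal.toReal_ofReal (by positivity)] at h3
    calc ∑ i : ι, (d i) ^ s = ∑ i : ι, (EMetric.diam (E i.1) ^ s).toReal := by
          exact Finset.sum_congr rfl fun i _ => h1 i
      _ = ∑ n ∈ F, (EMetric.diam (E n) ^ s).toReal :=
          Finset.sum_coe_sort F (fun n => (EMetric.diam (E n) ^ s).toReal)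
      _ = (∑ n ∈ F, EMetric.diam (E n) ^ s).toReal := by
          rw [ENNReal.toReal_sum]
          intro a ha
          exact ENNReal.rpow_ne_top_of_nonneg hs.le (hdne ⟨a, ha⟩)
      _ ≤ ε' ^ s / 2 := h2
  set z : ι → Prop := fun i => d i ≤ 0 with hz
  haveI hdec : DecidablePred z := fun i => Real.decidableLE (d i) 0
  have hex : ∀ i : ι, 0 < d i → ∃ m : ℕ, ε' < L ^ (m+1) * d i := by
    intro i hdi
    obtain ⟨m, hm⟩ := pow_unbounded_of_one_lt (ε' / d i) hL
    refine ⟨m, ?_⟩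
    have h1 : L ^ m ≤ L ^ (m+1) := pow_le_pow_right₀ hL.le (by omega)
    have h2 : ε' / d i < L ^ (m+1) := lt_of_lt_of_le hm h1
    calc ε' = (ε' / d i) * d i := by field_simp
      _ < L ^ (m+1) * d i := mul_lt_mul_of_pos_right h2 hdi
  set a : ι → ℕ := fun i => if h : 0 < d i then Nat.find (hex i h) + 1 else 1 with ha'
  have ha : ∀ i, 1 ≤ a i := by
    intro i; rw [ha']; dsimp only; split <;> omega
  have hkey : ∀ i : ι, ∀ k, k < a i → L ^ k * d i ≤ ε' := by
    intro i k hk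
    rcases Nat.eq_zero_or_pos k with rfl | hkpos
    · simpa using hd_le i
    · by_cases h : 0 < d i
      · rw [ha'] at hk; simp only [dif_pos h] at hk
        obtain ⟨m, rfl⟩ : ∃ m, k = m + 1 := ⟨k - 1, by omega⟩
        have hm : m < Nat.find (hex i h) := by omega
        have h6 := Nat.find_min (hex i h) hm
        push_neg at h6
        exact h6
      · push_neg at h
        have h7 : d i = 0 := le_antisymm h (hd0 i)
        rw [h7, mul_zero]; exact hε'pos.le
  have hdyn : ∀ i : ι, ∀ k : ℕ, (z i ∨ k < a i) → ∀ x ∈ E' i, ∀ y ∈ E' i,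
      dist (f^[k] x) (f^[k] y) ≤ ε' := by
    intro i k hcase x hx y hy
    have hxy := hdist i x hx y hy
    have hiter := aux_iter_lip hL0.le hf k x y
    rcases hcase with hzi | hk
    · have hd00 : dist x y = 0 := le_antisymm (hxy.trans hzi) dist_nonneg
      calc dist (f^[k] x) (f^[k] y) ≤ L ^ k * dist x y := hiter
        _ = 0 := by rw [hd00, mul_zero]
        _ ≤ ε' := hε'pos.le
    · calc dist (f^[k] x) (f^[k] y) ≤ L ^ k * dist x y := hiter
        _ ≤ L ^ k * d i := mul_le_mul_of_nonneg_left hxy (by positivity)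
        _ ≤ ε' := hkey i k hk
  set lam : ℝ := L ^ s with hlam'
  have hlam0 : 0 < lam := Real.rpow_pos_of_pos hL0 s
  have hlam : 1 ≤ lam := Real.one_le_rpow hL.le hs.le
  have hsum' : ∑ i ∈ Finset.univ.filter (fun i => ¬ z i), (1/lam) ^ (a i) ≤ 1/2 := by
    have hterm : ∀ i ∈ Finset.univ.filter (fun i => ¬ z i),
        (1/lam) ^ (a i) ≤ (d i) ^ s / ε' ^ s := by
      intro i hi
      have hdi : 0 < d i := by
        have h8 := (Finset.mem_filter.1 hi).2
        rw [hz] at h8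
        exact lt_of_not_ge h8
      have hfind : ε' < L ^ (a i) * d i := by
        rw [ha']; dsimp only; rw [dif_pos hdi]
        exact Nat.find_spec (hex i hdi)
      have e1 : (1/lam) ^ (a i) = ((L ^ (a i) : ℝ) ^ s)⁻¹ := by
        rw [one_div, inv_pow, hlam']
        congr 1
        rw [← Real.rpow_natCast (L ^ s) (a i), ← Real.rpow_mul hL0.le, mul_comm,
          Real.rpow_mul hL0.le, Real.rpow_natCast]
      have e2 : ε' / d i < L ^ (a i) := (div_lt_iff₀ hdi).2 hfind
      have e3 : ((ε' / d i) : ℝ) ^ s ≤ ((L ^ (a i) : ℝ)) ^ s :=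
        Real.rpow_le_rpow (by positivity) e2.le hs.le
      have e4 : (((L ^ (a i) : ℝ)) ^ s)⁻¹ ≤ (((ε' / d i) : ℝ) ^ s)⁻¹ :=
        inv_anti₀ (Real.rpow_pos_of_pos (by positivity) s) e3
      have e5 : (((ε' / d i) : ℝ) ^ s)⁻¹ = (d i) ^ s / ε' ^ s := by
        rw [← Real.inv_rpow (by positivity), inv_div, Real.div_rpow (hd0 i) hε'pos.le]
      rw [e1]
      exact e4.trans_eq e5
    calc ∑ i ∈ Finset.univ.filter (fun i => ¬ z i), (1/lam) ^ (a i)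
        ≤ ∑ i ∈ Finset.univ.filter (fun i => ¬ z i), (d i) ^ s / ε' ^ s :=
          Finset.sum_le_sum hterm
      _ ≤ ∑ i : ι, (d i) ^ s / ε' ^ s := by
          apply Finset.sum_le_sum_of_subset_of_nonneg (Finset.filter_subset _ _)
          intro i _ _
          have := hd0 i
          positivity
      _ = (∑ i : ι, (d i) ^ s) / ε' ^ s := by rw [Finset.sum_div]
      _ ≤ (ε' ^ s / 2) / ε' ^ s := by
          gcongr
      _ = 1/2 := by
          have h9 : (0:ℝ) < ε' ^ s := Real.rpow_pos_of_pos hε'pos s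
          field_simp
  have hcover' : ∀ y : X, ∃ i : ι, y ∈ E' i := by
    intro y; obtain ⟨n, hn, hyn⟩ := hcov y; exact ⟨⟨n, hn⟩, hyn⟩
  set C : ℝ := ((Fintype.card ι : ℝ) + 1) ^ (Finset.univ.sup a)
      + 2 * ((Finset.univ.filter z).card : ℝ) with hC'
  have hC1 : 1 ≤ C := by
    rw [hC']
    have h10 : (1:ℝ) ≤ ((Fintype.card ι : ℝ) + 1) ^ (Finset.univ.sup a) := by
      apply one_le_pow₀
      have := Nat.cast_nonneg (α := ℝ) (Fintype.card ι)
      linarith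
    have h11 : (0:ℝ) ≤ 2 * ((Finset.univ.filter z).card : ℝ) := by positivity
    linarith
  have hmc : ∀ n : ℕ, ((coverMincard f Set.univ {p : X × X | dist p.1 p.2 < ε} n : ℕ∞) : ℝ≥0∞)
      ≤ ENNReal.ofReal (C * lam ^ n) := by
    intro n
    obtain ⟨𝒜, h1, h2, _, h4⟩ := aux_words f ε' E' a z hcover' ha hdyn hlam hsum' n
    have h5 : coverMincard f Set.univ {p : X × X | dist p.1 p.2 < ε} n ≤ (𝒜.card : ℕ∞) :=
      aux_mincard_le f (show ε' < ε by rw [hε'def]; linarith) h1 h2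
    calc ((coverMincard f Set.univ {p : X × X | dist p.1 p.2 < ε} n : ℕ∞) : ℝ≥0∞)
        ≤ ((𝒜.card : ℕ∞) : ℝ≥0∞) := by exact_mod_cast h5
      _ = ((𝒜.card : ℕ) : ℝ≥0∞) := by norm_cast
      _ ≤ ENNReal.ofReal (C * lam ^ n) := by
          rw [← ENNReal.ofReal_natCast 𝒜.card]
          exact ENNReal.ofReal_le_ofReal h4
  refine (aux_entE_le f Set.univ _ hC1 hlam hmc).trans_eq ?_
  congr 1
  rw [hlam', Real.log_rpow hL0]
end

section
open MeasureTheory Dynamics Filter Set UniformSpace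
open scoped ENNReal
/-- for a compact metric space `X` and a Lipschitz map `f : X → X`
with constant `L ≥ 1`, the topological entropy of `f` is at most
`dimH(X) · log L`. -/
theorem entropy_le_dimH_mul_log_lipschitz {X : Type*} [MetricSpace X] [CompactSpace X]
    (f : X → X) (L : ℝ) (hL : 1 ≤ L)
    (hf : ∀ x y : X, dist (f x) (f y) ≤ L * dist x y) :
    Dynamics.coverEntropy f Set.univ ≤
      ((dimH (Set.univ : Set X) * ENNReal.ofReal (Real.log L) : ℝ≥0∞) : EReal) := by
  classical
  rcases isEmpty_or_nonempty X with hX | hX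
  · have huniv : (Set.univ : Set X) = ∅ := Set.univ_eq_empty_iff.2 hX
    rw [huniv, Dynamics.coverEntropy_empty]
    exact bot_le
  · rcases eq_or_lt_of_le hL with heq | hL1
    · -- L = 1 case
      have h0 : Dynamics.coverEntropy f Set.univ ≤ (0 : EReal) := by
        rw [Dynamics.coverEntropy_eq_iSup_basis Metric.uniformity_basis_dist f Set.univ]
        refine iSup₂_le fun ε hε => ?_
        obtain ⟨t, -, ht⟩ := IsCompact.elim_nhds_subcover
          (isCompact_univ : IsCompact (Set.univ : Set X))
          (fun x => Metric.ball x (ε/2)) (fun x _ => Metric.ball_mem_nhds x (by linarith))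
        have hC1 : (1:ℝ) ≤ (t.card : ℝ) + 1 := by have := Nat.cast_nonneg (α := ℝ) t.card; linarith
        have hmc : ∀ n : ℕ, ((coverMincard f Set.univ {p : X × X | dist p.1 p.2 < ε} n : ℕ∞)
            : ℝ≥0∞) ≤ ENNReal.ofReal (((t.card : ℝ) + 1) * 1 ^ n) := by
          intro n
          have hcover : IsDynCoverOf f Set.univ {p : X × X | dist p.1 p.2 < ε} n t := by
            intro y _
            obtain ⟨x, hxt, hyx⟩ := Set.mem_iUnion₂.1 (ht (Set.mem_univ y))
            simp only [Finset.mem_coe, mem_iUnion]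
            refine ⟨x, hxt, ?_⟩
            rw [mem_dynEntourage]
            intro k _
            show (f^[k] y, f^[k] x) ∈ {p : X × X | dist p.1 p.2 < ε}
            simp only [Set.mem_setOf_eq]
            rw [dist_comm]
            have h1 := aux_iter_lip (le_trans zero_le_one hL) hf k x y
            have h2 : dist x y < ε/2 := by
              rw [dist_comm]; exact Metric.mem_ball.1 hyx
            have h3 : L ^ k = 1 := by rw [← heq]; simp
            rw [h3] at h1
            linarith [h1]
          have h5 := hcover.coverMincard_le_card
          calc ((coverMincard f Set.univ {p : X × X | dist p.1 p.2 < ε} n : ℕ∞) : ℝ≥0∞)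
              ≤ ((t.card : ℕ∞) : ℝ≥0∞) := by exact_mod_cast h5
            _ = ((t.card : ℕ) : ℝ≥0∞) := by norm_cast
            _ ≤ ENNReal.ofReal (((t.card : ℝ) + 1) * 1 ^ n) := by
                rw [← ENNReal.ofReal_natCast t.card]
                apply ENNReal.ofReal_le_ofReal
                simp
        have h6 := aux_entE_le f Set.univ {p : X × X | dist p.1 p.2 < ε} hC1 le_rfl hmc
        simpa [Real.log_one] using h6
      exact h0.trans (EReal.coe_ennreal_nonneg _)
    · -- 1 < L
      by_cases hdim : dimH (Set.univ : Set X) = ⊤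
      · have hlogL : 0 < Real.log L := Real.log_pos hL1
        rw [hdim, ENNReal.top_mul (by
          rw [ne_eq, ENNReal.ofReal_eq_zero]
          push_neg
          linarith)]
        exact le_top.trans_eq EReal.coe_ennreal_top.symm
      · borelize X
        set dd : ℝ := (dimH (Set.univ : Set X)).toReal with hdd
        have hdd0 : 0 ≤ dd := ENNReal.toReal_nonneg
        have hlogL : 0 < Real.log L := Real.log_pos hL1
        have hkey : ∀ s : ℝ, dd < s →
            Dynamics.coverEntropy f Set.univ ≤ ((s * Real.log L : ℝ) : EReal) := by
          intro s hscond
          have hs0 : 0 < s := lt_of_le_of_lt hdd0 hscond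
          have hμ : μH[s] (Set.univ : Set X) = 0 := by
            have hlt : dimH (Set.univ : Set X) < (s.toNNReal : ℝ≥0∞) := by
              rw [← ENNReal.ofReal]
              exact (ENNReal.lt_ofReal_iff_toReal_lt hdim).2 hscond
            have h7 := hausdorffMeasure_of_dimH_lt hlt
            rwa [show ((s.toNNReal : ℝ)) = s from Real.coe_toNNReal s hs0.le] at h7
          exact aux_key f hL1 hf hs0 hμ
        have hle : ∀ n : ℕ, Dynamics.coverEntropy f Set.univ
            ≤ (((dd + 1/(n+1)) * Real.log L : ℝ) : EReal) := by
          intro n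
          apply hkey
          have : (0:ℝ) < 1/((n:ℝ)+1) := by positivity
          linarith
        have hlim : Tendsto (fun n : ℕ => (((dd + 1/(n+1)) * Real.log L : ℝ) : EReal)) atTop
            (nhds ((dd * Real.log L : ℝ) : EReal)) := by
          apply (continuous_coe_real_ereal.tendsto _).comp
          have h8 : Tendsto (fun n : ℕ => (dd + 1/((n:ℝ)+1)) * Real.log L) atTop
              (nhds ((dd + 0) * Real.log L)) :=
            (tendsto_const_nhds.add tendsto_one_div_add_atTop_nhds_zero_nat).mul_const _
          simpa using h8
        have hfinal : Dynamics.coverEntropy f Set.univ ≤ ((dd * Real.log L : ℝ) : EReal) :=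
          ge_of_tendsto' hlim hle
        refine hfinal.trans_eq ?_
        have hne : (dimH (Set.univ : Set X) * ENNReal.ofReal (Real.log L)) ≠ ⊤ :=
          ENNReal.mul_ne_top hdim ENNReal.ofReal_ne_top
        have h9 : (dimH (Set.univ : Set X) * ENNReal.ofReal (Real.log L)).toReal
            = dd * Real.log L := by
          rw [ENNReal.toReal_mul, ENNReal.toReal_ofReal hlogL.le]
        rw [← h9]
        rw [show (((dimH (Set.univ : Set X) * ENNReal.ofReal (Real.log L)).toReal : ℝ) : EReal)
            = (((dimH (Set.univ : Set X) * ENNReal.ofReal (Real.log L) : ℝ≥0∞) : EReal).toReal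
              : EReal) by rw [EReal.toReal_coe_ennreal]]
        exact EReal.coe_toReal
          (by rw [ne_eq, EReal.coe_ennreal_eq_top_iff]; exact hne)
          (EReal.coe_ennreal_ne_bot _)
end
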